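/- Let a ∈ ℝ and r ∈ ℝ with r ≠ 0. There is a 5-dimensional real Lie algebra 𝔤 with basis e₁,...,e₅ and dual basis e¹,...,e⁵ whose Chevalley–Eilenberg differentials satisfy (writing e^{ij} for eⁱ∧eʲ): de¹ = 0, de² = r e^{12} + a e^{13} + a e^{24} + (a(r² + a²)/(2r)) e^{25} + (a²/r) e^{34} + (a²(r² + a²)/(2r²)) e^{35}, de³ = a e^{12} + (a²/r) e^{13} − r e^{24} − ((r² + a²)/2) e^{25} − a e^{34} − (a(r² + a²)/(2r)) e^{35}, de⁴ = −((r² + a²)²/(2r²)) e^{15} + ((r² + a²)/r) e^{23}, de⁵ = −2e^{14} − 2e^{23} (i.e., the bracket determined by these equations satisfies the Jacobi identity). Moreover, 𝔤 is solvable, the quadruplet η = e⁵, ω₁ = e^{12} + e^{34}, ω₂ = e^{13} − e^{24}, ω₃ = e^{14} + e^{23} is a hypo-contact structure on 𝔤, and 𝔤 is isomorphic to 𝔥₅. -/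

import Mathlib

noncomputable section
set_option maxHeartbeats 4000000
set_option linter.unusedVariables false

/-- Chevalley–Eilenberg differential of a 1-form on a Lie algebra. -/
def dOne {V : Type*} [LieRing V] [LieAlgebra ℝ V] (α : V → ℝ) (x y : V) : ℝ :=
  -α ⁅x, y⁆

/-- Chevalley–Eilenberg differential of a 2-form on a Lie algebra. -/
def dTwo {V : Type*} [LieRing V] [LieAlgebra ℝ V] (ω : V → V → ℝ) (x y z : V) : ℝ :=
  -ω ⁅x, y⁆ z + ω ⁅x, z⁆ y - ω ⁅y, z⁆ x

/-- Chevalley–Eilenberg differential of a 3-form on a Lie algebra. -/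
def dThree {V : Type*} [LieRing V] [LieAlgebra ℝ V] (σ : V → V → V → ℝ)
    (x y z w : V) : ℝ :=
  -σ ⁅x, y⁆ z w + σ ⁅x, z⁆ y w - σ ⁅x, w⁆ y z
    - σ ⁅y, z⁆ x w + σ ⁅y, w⁆ x z - σ ⁅z, w⁆ x y

/-- Wedge product of two 1-forms, as an alternating bilinear map. -/
def wedge1 {V : Type*} [LieRing V] [LieAlgebra ℝ V] (α β : V →ₗ[ℝ] ℝ) :
    V →ₗ[ℝ] V →ₗ[ℝ] ℝ :=
  LinearMap.mk₂ ℝ (fun x y => α x * β y - α y * β x)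
    (fun m₁ m₂ n => by simp [map_add]; ring)
    (fun c m n => by simp [map_smul, smul_eq_mul]; ring)
    (fun m n₁ n₂ => by simp [map_add]; ring)
    (fun c m n => by simp [map_smul, smul_eq_mul]; ring)

/-- Wedge product of a 1-form and a 2-form. -/
def wedge12 {V : Type*} (α : V → ℝ) (ω : V → V → ℝ) (x y z : V) : ℝ :=
  α x * ω y z - α y * ω x z + α z * ω x y

/-- Wedge product of two 2-forms. -/
def wedge22 {V : Type*} (ω τ : V → V → ℝ) (x y z w : V) : ℝ :=
  ω x y * τ z w - ω x z * τ y w + ω x w * τ y z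
    + ω y z * τ x w - ω y w * τ x z + ω z w * τ x y

/-- Wedge product of a 4-form and a 1-form. -/
def wedge41 {V : Type*} (v : V → V → V → V → ℝ) (α : V → ℝ)
    (x₀ x₁ x₂ x₃ x₄ : V) : ℝ :=
  α x₀ * v x₁ x₂ x₃ x₄ - α x₁ * v x₀ x₂ x₃ x₄ + α x₂ * v x₀ x₁ x₃ x₄
    - α x₃ * v x₀ x₁ x₂ x₄ + α x₄ * v x₀ x₁ x₂ x₃

/-- An SU(2)-structure on a 5-dimensional real Lie algebra. -/
structure IsSU2Structure {V : Type*} [LieRing V] [LieAlgebra ℝ V]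
    (η : V →ₗ[ℝ] ℝ) (ω₁ ω₂ ω₃ : V →ₗ[ℝ] V →ₗ[ℝ] ℝ) : Prop where
  alt1 : ∀ x, ω₁ x x = 0
  alt2 : ∀ x, ω₂ x x = 0
  alt3 : ∀ x, ω₃ x x = 0
  vol : ∃ v : V → V → V → V → ℝ,
    wedge22 (fun a b => ω₁ a b) (fun a b => ω₁ a b) = v ∧
    wedge22 (fun a b => ω₂ a b) (fun a b => ω₂ a b) = v ∧
    wedge22 (fun a b => ω₃ a b) (fun a b => ω₃ a b) = v ∧
    wedge22 (fun a b => ω₁ a b) (fun a b => ω₂ a b) = (fun _ _ _ _ => 0) ∧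
    wedge22 (fun a b => ω₁ a b) (fun a b => ω₃ a b) = (fun _ _ _ _ => 0) ∧
    wedge22 (fun a b => ω₂ a b) (fun a b => ω₃ a b) = (fun _ _ _ _ => 0) ∧
    wedge41 v (fun x => η x) ≠ (fun _ _ _ _ _ => 0)
  compat : ∀ X Y : V, (∀ z, ω₃ X z = ω₁ Y z) → 0 ≤ ω₂ X Y

/-- A hypo-contact structure on a 5-dimensional real Lie algebra. -/
structure IsHypoContact {V : Type*} [LieRing V] [LieAlgebra ℝ V]
    (η : V →ₗ[ℝ] ℝ) (ω₁ ω₂ ω₃ : V →ₗ[ℝ] V →ₗ[ℝ] ℝ)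
    extends IsSU2Structure η ω₁ ω₂ ω₃ : Prop where
  contact : ∀ x y, dOne (fun z => η z) x y = -2 * ω₃ x y
  closed1 : ∀ x y z w, dThree (wedge12 (fun z => η z) (fun a b => ω₁ a b)) x y z w = 0
  closed2 : ∀ x y z w, dThree (wedge12 (fun z => η z) (fun a b => ω₂ a b)) x y z w = 0

/-- The Lie algebra `𝔥₁`. -/
def IsH1 (V : Type*) [LieRing V] [LieAlgebra ℝ V] : Prop :=
  ∃ X : Module.Basis (Fin 5) ℝ V,
    ⁅X 0, X 1⁆ = 0 ∧ ⁅X 0, X 2⁆ = 0 ∧ ⁅X 0, X 3⁆ = X 4 ∧ ⁅X 0, X 4⁆ = 0 ∧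
    ⁅X 1, X 2⁆ = X 4 ∧ ⁅X 1, X 3⁆ = 0 ∧ ⁅X 1, X 4⁆ = 0 ∧
    ⁅X 2, X 3⁆ = 0 ∧ ⁅X 2, X 4⁆ = 0 ∧ ⁅X 3, X 4⁆ = 0

/-- The Lie algebra `𝔥₂`. -/
def IsH2 (V : Type*) [LieRing V] [LieAlgebra ℝ V] : Prop :=
  ∃ X : Module.Basis (Fin 5) ℝ V,
    ⁅X 0, X 1⁆ = 0 ∧ ⁅X 0, X 2⁆ = 0 ∧ ⁅X 0, X 3⁆ = 0 ∧ ⁅X 0, X 4⁆ = (2 : ℝ) • X 0 ∧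
    ⁅X 1, X 2⁆ = X 0 ∧ ⁅X 1, X 3⁆ = 0 ∧ ⁅X 1, X 4⁆ = X 1 ∧
    ⁅X 2, X 3⁆ = 0 ∧ ⁅X 2, X 4⁆ = X 2 ∧ ⁅X 3, X 4⁆ = (-3 : ℝ) • X 3

/-- The Lie algebra `𝔥₃`. -/
def IsH3 (V : Type*) [LieRing V] [LieAlgebra ℝ V] : Prop :=
  ∃ X : Module.Basis (Fin 5) ℝ V,
    ⁅X 0, X 1⁆ = 0 ∧ ⁅X 0, X 2⁆ = 0 ∧ ⁅X 0, X 3⁆ = (2 : ℝ) • X 0 ∧ ⁅X 0, X 4⁆ = 0 ∧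
    ⁅X 1, X 2⁆ = X 0 ∧ ⁅X 1, X 3⁆ = X 1 ∧ ⁅X 1, X 4⁆ = -X 2 ∧
    ⁅X 2, X 3⁆ = X 2 ∧ ⁅X 2, X 4⁆ = X 1 ∧ ⁅X 3, X 4⁆ = 0

/-- The Lie algebra `𝔥₄`. -/
def IsH4 (V : Type*) [LieRing V] [LieAlgebra ℝ V] : Prop :=
  ∃ X : Module.Basis (Fin 5) ℝ V,
    ⁅X 0, X 1⁆ = 0 ∧ ⁅X 0, X 2⁆ = 0 ∧ ⁅X 0, X 3⁆ = X 0 ∧ ⁅X 0, X 4⁆ = 0 ∧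
    ⁅X 1, X 2⁆ = 0 ∧ ⁅X 1, X 3⁆ = 0 ∧ ⁅X 1, X 4⁆ = X 1 ∧
    ⁅X 2, X 3⁆ = -X 2 ∧ ⁅X 2, X 4⁆ = -X 2 ∧ ⁅X 3, X 4⁆ = 0

/-- The Lie algebra `𝔥₅`. -/
def IsH5 (V : Type*) [LieRing V] [LieAlgebra ℝ V] : Prop :=
  ∃ X : Module.Basis (Fin 5) ℝ V,
    ⁅X 0, X 1⁆ = 0 ∧ ⁅X 0, X 2⁆ = 0 ∧ ⁅X 0, X 3⁆ = 0 ∧ ⁅X 0, X 4⁆ = X 0 ∧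
    ⁅X 1, X 2⁆ = 0 ∧ ⁅X 1, X 3⁆ = X 0 ∧ ⁅X 1, X 4⁆ = 0 ∧
    ⁅X 2, X 3⁆ = X 1 ∧ ⁅X 2, X 4⁆ = -X 2 ∧ ⁅X 3, X 4⁆ = X 3

/-- `e^{ij}`, the wedge of the `i`-th and `j`-th dual basis 1-forms. -/
def bw {V : Type*} [LieRing V] [LieAlgebra ℝ V] (e : Module.Basis (Fin 5) ℝ V) (i j : Fin 5) :
    V →ₗ[ℝ] V →ₗ[ℝ] ℝ :=
  wedge1 (e.coord i) (e.coord j)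

/-- The content of Statement 8: structure equations, solvability, hypo-contact structure
and the isomorphism type, for a Lie algebra `V`. -/
def GoodLieAlgebra8 (a r : ℝ) (V : Type) [LieRing V] [LieAlgebra ℝ V] : Prop :=
  LieAlgebra.IsSolvable V ∧
  ∃ e : Module.Basis (Fin 5) ℝ V,
      (∀ x y : _, dOne (⇑(e.coord 0)) x y = 0) ∧
      (∀ x y : _, dOne (⇑(e.coord 1)) x y = (r) * bw e 0 1 x y + (a) * bw e 0 2 x y + (a) * bw e 1 3 x y + (a*(r^2+a^2)/(2*r)) * bw e 1 4 x y + (a^2/r) * bw e 2 3 x y + (a^2*(r^2+a^2)/(2*r^2)) * bw e 2 4 x y) ∧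
      (∀ x y : _, dOne (⇑(e.coord 2)) x y = (a) * bw e 0 1 x y + (a^2/r) * bw e 0 2 x y + (-r) * bw e 1 3 x y + (-((r^2+a^2)/2)) * bw e 1 4 x y + (-a) * bw e 2 3 x y + (-(a*(r^2+a^2)/(2*r))) * bw e 2 4 x y) ∧
      (∀ x y : _, dOne (⇑(e.coord 3)) x y = (-((r^2+a^2)^2/(2*r^2))) * bw e 0 4 x y + ((r^2+a^2)/r) * bw e 1 2 x y) ∧
      (∀ x y : _, dOne (⇑(e.coord 4)) x y = (-2) * bw e 0 3 x y + (-2) * bw e 1 2 x y) ∧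
      IsHypoContact (e.coord 4) (bw e 0 1 + bw e 2 3) (bw e 0 2 - bw e 1 3) (bw e 0 3 + bw e 1 2) ∧
      IsH5 V

def gbr (a r : ℝ) (x y : Fin 5 → ℝ) : Fin 5 → ℝ :=
  fun k =>
    ![0,
      -r*(x 0*y 1-x 1*y 0) - a*(x 0*y 2-x 2*y 0) - a*(x 1*y 3-x 3*y 1)
        - (a*(r^2+a^2)/(2*r))*(x 1*y 4-x 4*y 1) - (a^2/r)*(x 2*y 3-x 3*y 2)
        - (a^2*(r^2+a^2)/(2*r^2))*(x 2*y 4-x 4*y 2),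
      -a*(x 0*y 1-x 1*y 0) - (a^2/r)*(x 0*y 2-x 2*y 0) + r*(x 1*y 3-x 3*y 1)
        + ((r^2+a^2)/2)*(x 1*y 4-x 4*y 1) + a*(x 2*y 3-x 3*y 2)
        + (a*(r^2+a^2)/(2*r))*(x 2*y 4-x 4*y 2),
      ((r^2+a^2)^2/(2*r^2))*(x 0*y 4-x 4*y 0) - ((r^2+a^2)/r)*(x 1*y 2-x 2*y 1),
      2*(x 0*y 3-x 3*y 0) + 2*(x 1*y 2-x 2*y 1)] k

@[simp] lemma gbr0 (a r : ℝ) (x y : Fin 5 → ℝ) : gbr a r x y 0 = 0 := rfl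
@[simp] lemma gbr1 (a r : ℝ) (x y : Fin 5 → ℝ) : gbr a r x y 1 =
      -r*(x 0*y 1-x 1*y 0) - a*(x 0*y 2-x 2*y 0) - a*(x 1*y 3-x 3*y 1)
        - (a*(r^2+a^2)/(2*r))*(x 1*y 4-x 4*y 1) - (a^2/r)*(x 2*y 3-x 3*y 2)
        - (a^2*(r^2+a^2)/(2*r^2))*(x 2*y 4-x 4*y 2) := rfl
@[simp] lemma gbr2 (a r : ℝ) (x y : Fin 5 → ℝ) : gbr a r x y 2 =
      -a*(x 0*y 1-x 1*y 0) - (a^2/r)*(x 0*y 2-x 2*y 0) + r*(x 1*y 3-x 3*y 1)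
        + ((r^2+a^2)/2)*(x 1*y 4-x 4*y 1) + a*(x 2*y 3-x 3*y 2)
        + (a*(r^2+a^2)/(2*r))*(x 2*y 4-x 4*y 2) := rfl
@[simp] lemma gbr3 (a r : ℝ) (x y : Fin 5 → ℝ) : gbr a r x y 3 =
      ((r^2+a^2)^2/(2*r^2))*(x 0*y 4-x 4*y 0) - ((r^2+a^2)/r)*(x 1*y 2-x 2*y 1) := rfl
@[simp] lemma gbr4 (a r : ℝ) (x y : Fin 5 → ℝ) : gbr a r x y 4 =
      2*(x 0*y 3-x 3*y 0) + 2*(x 1*y 2-x 2*y 1) := rfl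

lemma gbr0' (a r : ℝ) (x y : Fin 5 → ℝ) (h : 0 < 5) : gbr a r x y ⟨0, h⟩ = 0 := rfl
lemma gbr1' (a r : ℝ) (x y : Fin 5 → ℝ) (h : 1 < 5) : gbr a r x y ⟨1, h⟩ =
      -r*(x 0*y 1-x 1*y 0) - a*(x 0*y 2-x 2*y 0) - a*(x 1*y 3-x 3*y 1)
        - (a*(r^2+a^2)/(2*r))*(x 1*y 4-x 4*y 1) - (a^2/r)*(x 2*y 3-x 3*y 2)
        - (a^2*(r^2+a^2)/(2*r^2))*(x 2*y 4-x 4*y 2) := rfl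
lemma gbr2' (a r : ℝ) (x y : Fin 5 → ℝ) (h : 2 < 5) : gbr a r x y ⟨2, h⟩ =
      -a*(x 0*y 1-x 1*y 0) - (a^2/r)*(x 0*y 2-x 2*y 0) + r*(x 1*y 3-x 3*y 1)
        + ((r^2+a^2)/2)*(x 1*y 4-x 4*y 1) + a*(x 2*y 3-x 3*y 2)
        + (a*(r^2+a^2)/(2*r))*(x 2*y 4-x 4*y 2) := rfl
lemma gbr3' (a r : ℝ) (x y : Fin 5 → ℝ) (h : 3 < 5) : gbr a r x y ⟨3, h⟩ =
      ((r^2+a^2)^2/(2*r^2))*(x 0*y 4-x 4*y 0) - ((r^2+a^2)/r)*(x 1*y 2-x 2*y 1) := rfl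
lemma gbr4' (a r : ℝ) (x y : Fin 5 → ℝ) (h : 4 < 5) : gbr a r x y ⟨4, h⟩ =
      2*(x 0*y 3-x 3*y 0) + 2*(x 1*y 2-x 2*y 1) := rfl

abbrev GA (a r : ℝ) (_hr : r ≠ 0) : Type := Fin 5 → ℝ

instance (a r : ℝ) (hr : r ≠ 0) : AddCommGroup (GA a r hr) :=
  inferInstanceAs (AddCommGroup (Fin 5 → ℝ))
instance (a r : ℝ) (hr : r ≠ 0) : Module ℝ (GA a r hr) :=
  inferInstanceAs (Module ℝ (Fin 5 → ℝ))

variable {a r : ℝ} {hr : r ≠ 0}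

@[simp] lemma GA.add_apply (x y : GA a r hr) (i : Fin 5) : (x + y) i = x i + y i := rfl
@[simp] lemma GA.smul_apply (c : ℝ) (x : GA a r hr) (i : Fin 5) : (c • x) i = c * x i := rfl
@[simp] lemma GA.zero_apply (i : Fin 5) : (0 : GA a r hr) i = 0 := rfl
@[simp] lemma GA.neg_apply (x : GA a r hr) (i : Fin 5) : (-x) i = -(x i) := rfl
@[simp] lemma GA.sub_apply (x y : GA a r hr) (i : Fin 5) : (x - y) i = x i - y i := rfl
@[simp] lemma GA.gbr0 (x y : GA a r hr) : gbr a r x y 0 = 0 := rfl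
@[simp] lemma GA.gbr1 (x y : GA a r hr) : gbr a r x y 1 =
      -r*(x 0*y 1-x 1*y 0) - a*(x 0*y 2-x 2*y 0) - a*(x 1*y 3-x 3*y 1)
        - (a*(r^2+a^2)/(2*r))*(x 1*y 4-x 4*y 1) - (a^2/r)*(x 2*y 3-x 3*y 2)
        - (a^2*(r^2+a^2)/(2*r^2))*(x 2*y 4-x 4*y 2) := rfl
@[simp] lemma GA.gbr2 (x y : GA a r hr) : gbr a r x y 2 =
      -a*(x 0*y 1-x 1*y 0) - (a^2/r)*(x 0*y 2-x 2*y 0) + r*(x 1*y 3-x 3*y 1)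
        + ((r^2+a^2)/2)*(x 1*y 4-x 4*y 1) + a*(x 2*y 3-x 3*y 2)
        + (a*(r^2+a^2)/(2*r))*(x 2*y 4-x 4*y 2) := rfl
@[simp] lemma GA.gbr3 (x y : GA a r hr) : gbr a r x y 3 =
      ((r^2+a^2)^2/(2*r^2))*(x 0*y 4-x 4*y 0) - ((r^2+a^2)/r)*(x 1*y 2-x 2*y 1) := rfl
@[simp] lemma GA.gbr4 (x y : GA a r hr) : gbr a r x y 4 =
      2*(x 0*y 3-x 3*y 0) + 2*(x 1*y 2-x 2*y 1) := rfl

section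
variable (a r : ℝ) (x y z : Fin 5 → ℝ)

lemma J0 : gbr a r x (gbr a r y z) 0 = gbr a r (gbr a r x y) z 0 + gbr a r y (gbr a r x z) 0 := by
  simp
lemma J1 (hr : r ≠ 0) : gbr a r x (gbr a r y z) 1 = gbr a r (gbr a r x y) z 1 + gbr a r y (gbr a r x z) 1 := by
  simp only [gbr0, gbr1, gbr2, gbr3, gbr4]; field_simp; ring
lemma J2 (hr : r ≠ 0) : gbr a r x (gbr a r y z) 2 = gbr a r (gbr a r x y) z 2 + gbr a r y (gbr a r x z) 2 := by
  simp only [gbr0, gbr1, gbr2, gbr3, gbr4]; field_simp; ring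
lemma J3 (hr : r ≠ 0) : gbr a r x (gbr a r y z) 3 = gbr a r (gbr a r x y) z 3 + gbr a r y (gbr a r x z) 3 := by
  simp only [gbr0, gbr1, gbr2, gbr3, gbr4]; field_simp; ring
lemma J4 (hr : r ≠ 0) : gbr a r x (gbr a r y z) 4 = gbr a r (gbr a r x y) z 4 + gbr a r y (gbr a r x z) 4 := by
  simp only [gbr0, gbr1, gbr2, gbr3, gbr4]; field_simp; ring

lemma gbr_leibniz (hr : r ≠ 0) : gbr a r x (gbr a r y z) = gbr a r (gbr a r x y) z + gbr a r y (gbr a r x z) := by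
  funext k
  fin_cases k
  · exact J0 a r x y z
  · exact J1 a r x y z hr
  · exact J2 a r x y z hr
  · exact J3 a r x y z hr
  · exact J4 a r x y z hr
end

instance instLieRingGA (a r : ℝ) (hr : r ≠ 0) : LieRing (GA a r hr) where
  bracket x y := gbr a r x y
  add_lie x y z := by funext k; fin_cases k <;> simp <;> ring
  lie_add x y z := by funext k; fin_cases k <;> simp <;> ring
  lie_self x := by funext k; fin_cases k <;> simp <;> ring
  leibniz_lie x y z := gbr_leibniz a r x y z hr

instance instLieAlgGA (a r : ℝ) (hr : r ≠ 0) : LieAlgebra ℝ (GA a r hr) where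
  lie_smul c x y := by
    funext k
    change gbr a r x (c • y) k = c * gbr a r x y k
    fin_cases k <;> simp <;> ring

variable {a r : ℝ} {hr : r ≠ 0}

@[simp] lemma GA.bracket_apply (x y : GA a r hr) (i : Fin 5) :
    ⁅x, y⁆ i = gbr a r x y i := rfl

def gBasis (a r : ℝ) (hr : r ≠ 0) : Module.Basis (Fin 5) ℝ (GA a r hr) :=
  Module.Basis.ofEquivFun (LinearEquiv.refl ℝ (Fin 5 → ℝ))

@[simp] lemma gBasis_coord (i : Fin 5) (x : GA a r hr) :
    (gBasis a r hr).coord i x = x i := rfl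

section
set_option maxHeartbeats 1000000
section
variable {a r : ℝ} {hr : r ≠ 0}

@[simp] lemma gBasis_repr (x : GA a r hr) (i : Fin 5) : (gBasis a r hr).repr x i = x i := rfl

@[simp] lemma bw_apply (i j : Fin 5) (x y : GA a r hr) :
    bw (gBasis a r hr) i j x y = x i * y j - x j * y i := by
  simp [bw, wedge1, Module.Basis.coord_apply]; ring

lemma struct0 (x y : GA a r hr) : dOne (⇑((gBasis a r hr).coord 0)) x y = 0 := by
  simp [dOne]

lemma struct1 (x y : GA a r hr) : dOne (⇑((gBasis a r hr).coord 1)) x y =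
    r * bw (gBasis a r hr) 0 1 x y + a * bw (gBasis a r hr) 0 2 x y
      + a * bw (gBasis a r hr) 1 3 x y + (a*(r^2+a^2)/(2*r)) * bw (gBasis a r hr) 1 4 x y
      + (a^2/r) * bw (gBasis a r hr) 2 3 x y
      + (a^2*(r^2+a^2)/(2*r^2)) * bw (gBasis a r hr) 2 4 x y := by
  simp [dOne]; ring

lemma struct2 (x y : GA a r hr) : dOne (⇑((gBasis a r hr).coord 2)) x y =
    a * bw (gBasis a r hr) 0 1 x y + (a^2/r) * bw (gBasis a r hr) 0 2 x y
      + (-r) * bw (gBasis a r hr) 1 3 x y + (-((r^2+a^2)/2)) * bw (gBasis a r hr) 1 4 x y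
      + (-a) * bw (gBasis a r hr) 2 3 x y
      + (-(a*(r^2+a^2)/(2*r))) * bw (gBasis a r hr) 2 4 x y := by
  simp [dOne]; ring

lemma struct3 (x y : GA a r hr) : dOne (⇑((gBasis a r hr).coord 3)) x y =
    (-((r^2+a^2)^2/(2*r^2))) * bw (gBasis a r hr) 0 4 x y
      + ((r^2+a^2)/r) * bw (gBasis a r hr) 1 2 x y := by
  simp [dOne]; ring

lemma struct4 (x y : GA a r hr) : dOne (⇑((gBasis a r hr).coord 4)) x y =
    (-2) * bw (gBasis a r hr) 0 3 x y + (-2) * bw (gBasis a r hr) 1 2 x y := by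
  simp [dOne]; ring
end

section
variable {a r : ℝ}

lemma hypo (hr : r ≠ 0) :
    IsHypoContact ((gBasis a r hr).coord 4)
      (bw (gBasis a r hr) 0 1 + bw (gBasis a r hr) 2 3)
      (bw (gBasis a r hr) 0 2 - bw (gBasis a r hr) 1 3)
      (bw (gBasis a r hr) 0 3 + bw (gBasis a r hr) 1 2) := by
  constructor
  case contact =>
    intro x y; simp [dOne]; ring
  case closed1 =>
    intro x y z w
    simp only [dThree, wedge12, LinearMap.add_apply, bw_apply, Module.Basis.coord_apply, gBasis_repr,
      GA.bracket_apply, gbr0, gbr1, gbr2, gbr3, gbr4]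
    field_simp
    ring
  case closed2 =>
    intro x y z w
    simp only [dThree, wedge12, LinearMap.add_apply, LinearMap.sub_apply, bw_apply,
      Module.Basis.coord_apply, gBasis_repr,
      GA.bracket_apply, gbr0, gbr1, gbr2, gbr3, gbr4]
    field_simp
    ring
  constructor
  case alt1 => intro x; simp; ring
  case alt2 => intro x; simp; ring
  case alt3 => intro x; simp; ring
  case vol =>
    refine ⟨_, rfl, ?_, ?_, ?_, ?_, ?_, ?_⟩
    · funext x y z w; simp [wedge22]; ring
    · funext x y z w; simp [wedge22]; ring
    · funext x y z w; simp [wedge22]; ring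
    · funext x y z w; simp [wedge22]; ring
    · funext x y z w; simp [wedge22]; ring
    · intro hcontra
      have h := congrFun (congrFun (congrFun (congrFun (congrFun hcontra
        (![1,0,0,0,0] : Fin 5 → ℝ)) (![0,1,0,0,0] : Fin 5 → ℝ)) (![0,0,1,0,0] : Fin 5 → ℝ))
        (![0,0,0,1,0] : Fin 5 → ℝ)) (![0,0,0,0,1] : Fin 5 → ℝ)
      simp [wedge41, wedge22, Module.Basis.coord_apply] at h
  case compat =>
    intro X Y h
    have h0 := h (![1,0,0,0,0] : Fin 5 → ℝ)
    have h1 := h (![0,1,0,0,0] : Fin 5 → ℝ)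
    have h2 := h (![0,0,1,0,0] : Fin 5 → ℝ)
    have h3 := h (![0,0,0,1,0] : Fin 5 → ℝ)
    simp at h0 h1 h2 h3 ⊢
    rw [show Y 0 = -X 2 by linarith, show Y 1 = X 3 by linarith,
      show Y 2 = X 0 by linarith, show Y 3 = -X 1 by linarith]
    nlinarith [sq_nonneg (X 0), sq_nonneg (X 1), sq_nonneg (X 2), sq_nonneg (X 3)]
end

def Mmat (a r : ℝ) : Matrix (Fin 5) (Fin 5) ℝ :=
  !![0, 0, 0, 0, r/(r^2+a^2);
     0, 2*a*(r^2+a^2)/r, 0, r, 0;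
     0, -2*(r^2+a^2), 0, a, 0;
     -2*(r^2+a^2)^3/r^2, 0, 1, 0, 0;
     4*(r^2+a^2)^2/r, 0, 2*r/(r^2+a^2), 0, 0]

def Nmat (a r : ℝ) : Matrix (Fin 5) (Fin 5) ℝ :=
  !![0, 0, 0, -r^2/(4*(r^2+a^2)^3), r/(8*(r^2+a^2)^2);
     0, a*r/(2*(r^2+a^2)^2), -r^2/(2*(r^2+a^2)^2), 0, 0;
     0, 0, 0, 1/2, (r^2+a^2)/(4*r);
     0, r/(r^2+a^2), a/(r^2+a^2), 0, 0;
     (r^2+a^2)/r, 0, 0, 0, 0]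

section
variable {a r : ℝ}

lemma hs (hr : r ≠ 0) : r^2 + a^2 ≠ 0 := by positivity

lemma hMN (hr : r ≠ 0) : Mmat a r * Nmat a r = 1 := by
  have h2 := hs (a := a) hr
  ext i j
  fin_cases i <;> fin_cases j <;>
    simp [Matrix.mul_apply, Fin.sum_univ_five, Mmat, Nmat, Matrix.one_apply,
      Matrix.vecHead, Matrix.vecTail] <;>
    (try field_simp) <;> (try ring)

lemma hNM (hr : r ≠ 0) : Nmat a r * Mmat a r = 1 := by
  have h2 := hs (a := a) hr
  ext i j
  fin_cases i <;> fin_cases j <;>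
    simp [Matrix.mul_apply, Fin.sum_univ_five, Mmat, Nmat, Matrix.one_apply,
      Matrix.vecHead, Matrix.vecTail] <;>
    (try field_simp) <;> (try ring)

def gEquiv (a r : ℝ) (hr : r ≠ 0) : GA a r hr ≃ₗ[ℝ] GA a r hr :=
  LinearEquiv.ofLinear
    (Matrix.toLin' (Mmat a r) : (Fin 5 → ℝ) →ₗ[ℝ] (Fin 5 → ℝ))
    (Matrix.toLin' (Nmat a r) : (Fin 5 → ℝ) →ₗ[ℝ] (Fin 5 → ℝ))
    (by rw [← Matrix.toLin'_mul, hMN hr, Matrix.toLin'_one])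
    (by rw [← Matrix.toLin'_mul, hNM hr, Matrix.toLin'_one])

def XB (a r : ℝ) (hr : r ≠ 0) : Module.Basis (Fin 5) ℝ (GA a r hr) :=
  (gBasis a r hr).map (gEquiv a r hr)

lemma XB_apply (hr : r ≠ 0) (i : Fin 5) :
    XB a r hr i = (fun k => Mmat a r k i : Fin 5 → ℝ) := by
  funext k
  show (Matrix.toLin' (Mmat a r)) ((gBasis a r hr) i) k = _
  have grepr : ∀ (x : GA a r hr) (m : Fin 5), (gBasis a r hr).repr x m = x m := fun _ _ => rfl
  have : (gBasis a r hr) i = (fun j => if i = j then (1:ℝ) else 0 : Fin 5 → ℝ) := by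
    funext j
    rw [← grepr (gBasis a r hr i) j, Module.Basis.repr_self, Finsupp.single_apply]
  rw [this, Matrix.toLin'_apply]
  simp [Matrix.mulVec, dotProduct, Fin.sum_univ_five]
end

lemma isH5 (a r : ℝ) (hr : r ≠ 0) : IsH5 (GA a r hr) := by
  have h2 : r^2+a^2 ≠ 0 := hs (a := a) hr
  refine ⟨XB a r hr, ?_, ?_, ?_, ?_, ?_, ?_, ?_, ?_, ?_, ?_⟩ <;>
  · simp only [XB_apply hr]
    funext k
    simp only [GA.bracket_apply, GA.neg_apply, GA.zero_apply]
    fin_cases k <;>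
      simp [Mmat, Matrix.vecHead, Matrix.vecTail] <;>
      (try field_simp) <;> (try ring)

section
variable (a r : ℝ) (hr : r ≠ 0)

def I1 : LieIdeal ℝ (GA a r hr) where
  carrier := {x | x 0 = 0}
  add_mem' := by intro x y hx hy; simp_all [Set.mem_setOf_eq]
  zero_mem' := by simp [Set.mem_setOf_eq]
  smul_mem' := by intro c x hx; simp_all [Set.mem_setOf_eq]
  lie_mem := by intro x m _; show gbr a r x m 0 = 0; simp

def I2 : LieIdeal ℝ (GA a r hr) where
  carrier := {x | x 0 = 0 ∧ x 1 = -(a/r) * x 2 ∧ x 3 = -((r^2+a^2)/(2*r)) * x 4}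
  add_mem' := by
    intro x y hx hy
    obtain ⟨h1, h2, h3⟩ := hx; obtain ⟨k1, k2, k3⟩ := hy
    refine ⟨?_, ?_, ?_⟩ <;> simp only [Set.mem_setOf_eq, GA.add_apply] <;>
      simp only [h1, h2, h3, k1, k2, k3] <;> ring
  zero_mem' := by refine ⟨rfl, ?_, ?_⟩ <;> simp
  smul_mem' := by
    intro c x hx
    obtain ⟨h1, h2, h3⟩ := hx
    refine ⟨?_, ?_, ?_⟩ <;> simp only [Set.mem_setOf_eq, GA.smul_apply] <;>
      simp only [h1, h2, h3] <;> ring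
  lie_mem := by
    intro x m hm
    obtain ⟨h1, h2, h3⟩ := hm
    refine ⟨?_, ?_, ?_⟩ <;>
      simp only [Set.mem_setOf_eq, GA.bracket_apply, gbr0, gbr1, gbr2, gbr3, gbr4] <;>
      simp only [h1, h2, h3] <;> field_simp <;> ring

lemma solvableGA : LieAlgebra.IsSolvable (GA a r hr) := by
  rw [LieAlgebra.isSolvable_iff ℝ]
  refine ⟨3, ?_⟩
  rw [eq_bot_iff]
  have h1 : LieAlgebra.derivedSeries ℝ (GA a r hr) 1 ≤ I1 a r hr := by
    rw [LieAlgebra.derivedSeries_def, LieAlgebra.derivedSeriesOfIdeal_succ]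
    rw [LieSubmodule.lie_le_iff]
    intro x _ m _
    show gbr a r x m 0 = 0; simp
  have h2 : LieAlgebra.derivedSeries ℝ (GA a r hr) 2 ≤ I2 a r hr := by
    rw [show (2:ℕ) = 1 + 1 from rfl, LieAlgebra.derivedSeries_def,
      LieAlgebra.derivedSeriesOfIdeal_succ]
    refine le_trans (LieSubmodule.mono_lie h1 h1) ?_
    rw [LieSubmodule.lie_le_iff]
    intro x hx m hm
    have hx0 : x 0 = 0 := hx
    have hm0 : m 0 = 0 := hm
    refine ⟨?_, ?_, ?_⟩ <;>
      simp only [Set.mem_setOf_eq, GA.bracket_apply, gbr0, gbr1, gbr2, gbr3, gbr4] <;>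
      simp only [hx0, hm0] <;> (try field_simp) <;> ring
  have h3 : LieAlgebra.derivedSeries ℝ (GA a r hr) 3 ≤ ⊥ := by
    rw [show (3:ℕ) = 2 + 1 from rfl, LieAlgebra.derivedSeries_def,
      LieAlgebra.derivedSeriesOfIdeal_succ]
    refine le_trans (LieSubmodule.mono_lie h2 h2) ?_
    rw [LieSubmodule.lie_le_iff]
    intro x hx m hm
    obtain ⟨h1', h2', h3'⟩ := hx
    obtain ⟨k1, k2, k3⟩ := hm
    have : ⁅x, m⁆ = (0 : GA a r hr) := by
      funext k
      show gbr a r x m k = 0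
      fin_cases k <;>
        simp only [gbr0, gbr1, gbr2, gbr3, gbr4, gbr0', gbr1', gbr2', gbr3', gbr4'] <;>
        simp only [h1', h2', h3', k1, k2, k3] <;> (try field_simp) <;> (try ring)
    rw [this]
    exact (⊥ : LieIdeal ℝ (GA a r hr)).zero_mem
  exact h3
end


theorem exists_good_lie_algebra8 (a r : ℝ) (hr : r ≠ 0) :
    ∃ (V : Type) (i₁ : LieRing V) (i₂ : @LieAlgebra ℝ V _ i₁),
      @GoodLieAlgebra8 a r V i₁ i₂ := by
  refine ⟨GA a r hr, inferInstance, inferInstance, solvableGA a r hr, gBasis a r hr,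
    fun x y => struct0 x y, fun x y => struct1 x y, fun x y => struct2 x y,
    fun x y => struct3 x y, fun x y => struct4 x y, hypo hr, isH5 a r hr⟩

end
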